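/- arXiv:2305.12306 — 11 statements merged into one kernel-verified Lean document; each statement's English description precedes it below -/
import Mathlib

section
/- Let t, s ∈ ℂ and let P be a 2×2 complex matrix with det P = 1. Then for all vectors x, y ∈ ℂ², one has A(P·x, P·y, (t,s)) = P * A(x, y, (t,s)) * P⁻¹ and e(P·x, P·y) = e(x, y), where P·x denotes the usual matrix–vector product. In other words, the pullback under the parametrization ι_{(t,s)} of the conjugation action of SL(2,ℂ) on the quadric Q_t is the diagonal Möbius action on ℙ¹ × ℙ¹, independently of (t,s). -/
/-- The matrix `A(x, y, (t,s))` of the parametrization `ι_{(t,s)}` of the quadric `Q_t`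
in the projective compactification of `SL(2,ℂ)`. -/
noncomputable def Amat (t s : ℂ) (x y : Fin 2 → ℂ) : Matrix (Fin 2) (Fin 2) ℂ :=
  !![(t - s) / 2 * (x 1 * y 0) - (t + s) / 2 * (x 0 * y 1), s * (x 0 * y 0);
     -(s * (x 1 * y 1)), (t + s) / 2 * (x 1 * y 0) - (t - s) / 2 * (x 0 * y 1)]

/-- The scalar `e(x, y) = x₂y₁ − x₁y₂`. -/
def eFun (x y : Fin 2 → ℂ) : ℂ := x 1 * y 0 - x 0 * y 1

/-- The pullback under `ι_{(t,s)}` of the conjugation action of `SL(2,ℂ)` on `Q_t` is the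
diagonal Möbius action on `ℙ¹ × ℙ¹`, independently of `(t,s)`:
`A(P·x, P·y, (t,s)) = P * A(x,y,(t,s)) * P⁻¹` and `e(P·x, P·y) = e(x,y)`. -/
theorem Amat_mulVec_conj (t s : ℂ) (P : Matrix (Fin 2) (Fin 2) ℂ) (hP : P.det = 1)
    (x y : Fin 2 → ℂ) :
    Amat t s (P.mulVec x) (P.mulVec y) = P * Amat t s x y * P⁻¹ ∧
    eFun (P.mulVec x) (P.mulVec y) = eFun x y := by
  have hinv : P⁻¹ = P.adjugate := by
    rw [Matrix.inv_def, hP]; simp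
  have hdet : P 0 0 * P 1 1 - P 0 1 * P 1 0 = 1 := by
    rw [← Matrix.det_fin_two, hP]
  constructor
  · rw [hinv, Matrix.adjugate_fin_two]
    ext i j
    fin_cases i <;> fin_cases j <;>
      simp [Amat, Matrix.mulVec, Matrix.mul_apply, Fin.sum_univ_two, dotProduct] <;>
      ring
  · simp [eFun, Matrix.mulVec, Fin.sum_univ_two, dotProduct]
    linear_combination (x 1 * y 0 - x 0 * y 1) * hdet
end

section
/- For all t, s ∈ ℂ and all x, y ∈ ℂ², the matrix A(x,y,(t,s)) has trace equal to t·e(x,y); and if moreover t² − s² = 4, then det A(x,y,(t,s)) = e(x,y)². Consequently, when t² − s² = 4 the parametrization ι_{(t,s)} takes values in the quadric surface Q_t = { [a:b:c:d:e] : ad − bc = e², a + d = t·e }. -/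
/-- `tr A(x,y,(t,s)) = t·e(x,y)`, and if `t² − s² = 4` then `det A(x,y,(t,s)) = e(x,y)²`;
hence the parametrization `ι_{(t,s)}` takes values in the quadric
`Q_t = { [a:b:c:d:e] : ad − bc = e², a + d = t·e }`. -/
theorem Amat_trace_det (t s : ℂ) (x y : Fin 2 → ℂ) :
    (Amat t s x y).trace = t * eFun x y ∧
    (t ^ 2 - s ^ 2 = 4 → (Amat t s x y).det = eFun x y ^ 2) := by
  constructor
  · simp [Amat, eFun, Matrix.trace_fin_two]; ring
  · intro h
    have h4 : t ^ 2 - s ^ 2 = 4 := h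
    simp [Amat, eFun, Matrix.det_fin_two]
    field_simp
    linear_combination ((x 1 * y 0 - x 0 * y 1)^2) * h4
end

section
/- Let t, s ∈ ℂ with t real (conj t = t) and s purely imaginary (conj s = −s). Then for all x = (x₁,x₂), y = (y₁,y₂) ∈ ℂ², A((ȳ₁, ȳ₂), (x̄₁, x̄₂), (t,s)) = −conj(A(x, y, (t,s))), where conj denotes entrywise complex conjugation of the matrix and bars denote complex conjugation. Consequently, the twisted anti-holomorphic involution τ̃(p,q) = (τ(q), τ(p)) on ℙ¹ × ℙ¹ (with τ[x₁:x₂] = [x̄₁:x̄₂]) covers, via the parametrization ι_{(t,s)}, the entrywise complex conjugation on the quadric Q_t. -/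
/-- For `t` real and `s` purely imaginary,
`A((ȳ₁,ȳ₂), (x̄₁,x̄₂), (t,s)) = − conj(A(x,y,(t,s)))`: the twisted anti-holomorphic
involution `τ̃(p,q) = (τ(q), τ(p))` on `ℙ¹ × ℙ¹` covers, via `ι_{(t,s)}`, the entrywise
complex conjugation on the quadric `Q_t`. -/
theorem Amat_tau_conj (t s : ℂ) (htr : (starRingEnd ℂ) t = t) (hsi : (starRingEnd ℂ) s = -s)
    (x y : Fin 2 → ℂ) :
    Amat t s ![(starRingEnd ℂ) (y 0), (starRingEnd ℂ) (y 1)]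
        ![(starRingEnd ℂ) (x 0), (starRingEnd ℂ) (x 1)] =
      -(Amat t s x y).map (starRingEnd ℂ) := by
  ext i j
  fin_cases i <;> fin_cases j <;>
    simp [Amat, Matrix.map, map_mul, map_sub, map_add, map_div₀, htr, hsi,
      Complex.conj_ofNat] <;> (first | tauto | ring_nf) <;> tauto
end

section
/- Let t ∈ ℝ with |t| < 2, let s = i·√(4 − t²), and let x = (x₁,x₂) ∈ ℂ² be nonzero. Then e(x, (x̄₂, −x̄₁)) = |x₁|² + |x₂|², and the normalized matrix M := (|x₁|² + |x₂|²)⁻¹ · A(x, (x̄₂, −x̄₁), (t,s)) lies in the special unitary group SU(2) (i.e., M*·M = I and det M = 1) and has trace equal to t. Explicitly, M = (|x₁|²+|x₂|²)⁻¹ · [[ (t/2)(|x₁|²+|x₂|²) + (s/2)(|x₁|²−|x₂|²), s·x₁x̄₂ ], [ s·x₂x̄₁, (t/2)(|x₁|²+|x₂|²) + (s/2)(|x₂|²−|x₁|²) ]]. -/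
/-- For real `t` with `|t| < 2`, `s = i√(4 − t²)`, and `x ≠ 0`:
`e(x, (x̄₂,−x̄₁)) = |x₁|² + |x₂|²`, and the normalized matrix
`M = (|x₁|²+|x₂|²)⁻¹ · A(x, (x̄₂,−x̄₁), (t,s))` lies in `SU(2)` (i.e. `M*M = 1`,
`det M = 1`) with `tr M = t`, and is given by the stated explicit formula. -/
theorem Amat_su2_param (t : ℝ) (ht : |t| < 2) (x : Fin 2 → ℂ) (hx : x ≠ 0) :
    let s : ℂ := Complex.I * (Real.sqrt (4 - t ^ 2) : ℂ)
    let n : ℝ := Complex.normSq (x 0) + Complex.normSq (x 1)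
    let M : Matrix (Fin 2) (Fin 2) ℂ :=
      ((n : ℂ))⁻¹ • Amat (t : ℂ) s x ![(starRingEnd ℂ) (x 1), -(starRingEnd ℂ) (x 0)]
    eFun x ![(starRingEnd ℂ) (x 1), -(starRingEnd ℂ) (x 0)] = (n : ℂ) ∧
    star M * M = 1 ∧ M.det = 1 ∧ M.trace = (t : ℂ) ∧
    M = ((n : ℂ))⁻¹ •
      !![(t : ℂ) / 2 * (n : ℂ) +
            s / 2 * ((Complex.normSq (x 0) : ℂ) - (Complex.normSq (x 1) : ℂ)),
          s * (x 0 * (starRingEnd ℂ) (x 1));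
          s * (x 1 * (starRingEnd ℂ) (x 0)),
          (t : ℂ) / 2 * (n : ℂ) +
            s / 2 * ((Complex.normSq (x 1) : ℂ) - (Complex.normSq (x 0) : ℂ))] := by
  intro s n M
  have h4 : (0:ℝ) ≤ 4 - t ^ 2 := by nlinarith [sq_abs t, abs_nonneg t]
  have hs2 : s ^ 2 = (t:ℂ) ^ 2 - 4 := by
    have h : (Real.sqrt (4 - t ^ 2) : ℂ) ^ 2 = (((4:ℝ) - t ^ 2 : ℝ) : ℂ) := by
      rw [← Complex.ofReal_pow, Real.sq_sqrt h4]
    simp only [s, mul_pow, Complex.I_sq, h]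
    push_cast; ring
  have hsconj : (starRingEnd ℂ) s = -s := by
    simp only [s, map_mul, Complex.conj_I, Complex.conj_ofReal]
    ring
  have ha : ((Complex.normSq (x 0) : ℂ)) = x 0 * (starRingEnd ℂ) (x 0) :=
    (Complex.mul_conj _).symm
  have hb : ((Complex.normSq (x 1) : ℂ)) = x 1 * (starRingEnd ℂ) (x 1) :=
    (Complex.mul_conj _).symm
  have hn : (0:ℝ) < n := by
    have hx' : x 0 ≠ 0 ∨ x 1 ≠ 0 := by
      by_contra h
      push_neg at h
      exact hx (funext fun i => by fin_cases i <;> simp [h.1, h.2])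
    have h0 := Complex.normSq_nonneg (x 0)
    have h1 := Complex.normSq_nonneg (x 1)
    rcases hx' with h' | h'
    · have := Complex.normSq_pos.mpr h'; simp only [n]; linarith
    · have := Complex.normSq_pos.mpr h'; simp only [n]; linarith
  have hnne : (n:ℂ) ≠ 0 := by exact_mod_cast hn.ne'
  have hncast : ((n:ℝ):ℂ) = x 0 * (starRingEnd ℂ) (x 0) + x 1 * (starRingEnd ℂ) (x 1) := by
    simp only [n]; push_cast [ha, hb]; ring
  have hnconj : (starRingEnd ℂ) ((n:ℝ):ℂ) = ((n:ℝ):ℂ) := Complex.conj_ofReal _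
  set A : Matrix (Fin 2) (Fin 2) ℂ :=
      !![(t : ℂ) / 2 * (n : ℂ) +
            s / 2 * ((Complex.normSq (x 0) : ℂ) - (Complex.normSq (x 1) : ℂ)),
          s * (x 0 * (starRingEnd ℂ) (x 1));
          s * (x 1 * (starRingEnd ℂ) (x 0)),
          (t : ℂ) / 2 * (n : ℂ) +
            s / 2 * ((Complex.normSq (x 1) : ℂ) - (Complex.normSq (x 0) : ℂ))] with hA
  have hM : M = ((n : ℂ))⁻¹ • A := by
    ext i j
    fin_cases i <;> fin_cases j <;>
      simp only [M, Amat, hA, Matrix.smul_apply, Matrix.cons_val', Matrix.cons_val_zero,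
        Matrix.cons_val_one, Matrix.head_cons, Matrix.head_fin_const, Matrix.empty_val',
        Matrix.cons_val_fin_one, smul_eq_mul] <;>
      rw [ha, hb, hncast] <;> ring
  have hAA : star A * A = (((n:ℝ):ℂ) ^ 2) • (1 : Matrix (Fin 2) (Fin 2) ℂ) := by
    rw [hA]
    ext i j
    rw [Matrix.star_eq_conjTranspose]
    fin_cases i <;> fin_cases j <;>
      simp [Matrix.mul_apply, Fin.sum_univ_two, Matrix.one_apply, hsconj, Complex.conj_ofReal,
        map_ofNat, map_div₀, ha, hb, hncast]
    · linear_combination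
        (-(((x 0 * (starRingEnd ℂ) (x 0) + x 1 * (starRingEnd ℂ) (x 1)))^2)/4) * hs2
    · linear_combination (0:ℂ) * hs2
    · linear_combination (0:ℂ) * hs2
    · linear_combination
        (-(((x 0 * (starRingEnd ℂ) (x 0) + x 1 * (starRingEnd ℂ) (x 1)))^2)/4) * hs2
  have hdetA : A.det = ((n:ℝ):ℂ) ^ 2 := by
    rw [hA, Matrix.det_fin_two_of, ha, hb, hncast]
    linear_combination (-(((x 0 * (starRingEnd ℂ) (x 0) + x 1 * (starRingEnd ℂ) (x 1)))^2)/4) * hs2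
  refine ⟨?_, ?_, ?_, ?_, hM⟩
  · simp only [eFun, Matrix.cons_val_zero, Matrix.cons_val_one, Matrix.head_cons, hncast]
    ring
  · rw [hM, star_smul, smul_mul_assoc, Matrix.mul_smul, hAA, smul_smul, smul_smul]
    rw [star_inv₀]
    have : star ((n:ℝ):ℂ) = ((n:ℝ):ℂ) := hnconj
    rw [this]
    rw [show ((n:ℝ):ℂ)⁻¹ * ((n:ℝ):ℂ)⁻¹ * ((n:ℝ):ℂ) ^ 2 = 1 by field_simp]
    exact one_smul _ _
  · rw [hM, Matrix.det_smul, hdetA, Fintype.card_fin]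
    field_simp
  · rw [hM, Matrix.trace_smul, smul_eq_mul]
    have : A.trace = (t:ℂ) * ((n:ℝ):ℂ) := by
      simp only [hA, Matrix.trace_fin_two_of]
      ring
    rw [this]
    field_simp
end

section
/- Let t ∈ ℝ with |t| < 2, set y₀ = √(4 − t²) and s = i·y₀, let x = (x₁,x₂) ∈ ℂ², and set z = x₂·x̄₁. Then (1/i)·A(x, (x̄₁, x̄₂), (t,s)) equals the matrix with rows (t·Im z − y₀·Re z, y₀·|x₁|²) and (−y₀·|x₂|², t·Im z + y₀·Re z); in particular all its entries are real, its determinant equals 4·(Im z)², and its trace equals 2t·Im z. Consequently, whenever Im z ≠ 0, the matrix (1/(2·Im z))·(1/i)·A(x, (x̄₁,x̄₂), (t,s)) lies in SL(2,ℝ) and has trace t. -/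
/-- For real `t` with `|t| < 2`, `y₀ = √(4 − t²)`, `s = i·y₀`, and `z = x₂·x̄₁`:
`(1/i)·A(x, (x̄₁,x̄₂), (t,s))` is the real matrix with rows
`(t·Im z − y₀·Re z, y₀·|x₁|²)` and `(−y₀·|x₂|², t·Im z + y₀·Re z)`, which has determinant
`4(Im z)²` and trace `2t·Im z`; hence, when `Im z ≠ 0`, its normalization by `1/(2·Im z)`
lies in `SL(2,ℝ)` and has trace `t`. -/
theorem Amat_sl2R_param (t : ℝ) (ht : |t| < 2) (x : Fin 2 → ℂ) :
    let y₀ : ℝ := Real.sqrt (4 - t ^ 2)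
    let s : ℂ := Complex.I * (y₀ : ℂ)
    let z : ℂ := x 1 * (starRingEnd ℂ) (x 0)
    let N : Matrix (Fin 2) (Fin 2) ℝ :=
      !![t * z.im - y₀ * z.re, y₀ * Complex.normSq (x 0);
         -(y₀ * Complex.normSq (x 1)), t * z.im + y₀ * z.re]
    (Complex.I)⁻¹ • Amat (t : ℂ) s x ![(starRingEnd ℂ) (x 0), (starRingEnd ℂ) (x 1)] =
        N.map Complex.ofReal ∧
    N.det = 4 * z.im ^ 2 ∧
    N.trace = 2 * t * z.im ∧
    (z.im ≠ 0 →
      ((1 / (2 * z.im)) • N).det = 1 ∧ ((1 / (2 * z.im)) • N).trace = t) := by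
  intro y₀ s z N
  have hy2 : y₀ ^ 2 = 4 - t ^ 2 := by
    have h4 : (0:ℝ) ≤ 4 - t ^ 2 := by nlinarith [sq_abs t, abs_nonneg t]
    simpa [y₀] using Real.sq_sqrt h4
  have hnz : z.re ^ 2 + z.im ^ 2 = Complex.normSq (x 0) * Complex.normSq (x 1) := by
    have h : Complex.normSq z = Complex.normSq (x 1) * Complex.normSq (x 0) := by
      simp only [z, map_mul, Complex.normSq_conj]
    rw [Complex.normSq_apply] at h
    nlinarith [h]
  refine ⟨?_, ?_, ?_, ?_⟩
  · ext i j
    fin_cases i <;> fin_cases j <;>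
      simp [Amat, N, z, s, Matrix.smul_apply, Complex.ext_iff, Complex.normSq_apply] <;>
      ring_nf <;> simp
  · simp only [N, Matrix.det_fin_two_of]
    nlinarith [hnz, hy2]
  · simp [N, Matrix.trace_fin_two_of]; ring
  · intro him
    constructor
    · rw [Matrix.det_smul]
      simp only [N, Matrix.det_fin_two_of, Fintype.card_fin]
      have : (t * z.im - y₀ * z.re) * (t * z.im + y₀ * z.re) -
          y₀ * Complex.normSq (x 0) * -(y₀ * Complex.normSq (x 1)) = 4 * z.im ^ 2 := by
        nlinarith [hnz, hy2]
      rw [this]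
      field_simp
      ring
    · rw [Matrix.trace_smul]
      simp only [N, Matrix.trace_fin_two_of, smul_eq_mul]
      field_simp
      ring
end

section
/- Let A₁, A₂, A₃ be 2×2 complex matrices of determinant 1. Set aᵢ = −tr(Aᵢ) for i = 1,2,3, a₄ = −tr(A₁A₂A₃), c₁₂ = −tr(A₁A₂), c₂₃ = −tr(A₂A₃), and c₁₃ = −tr(A₁A₃). Then c₁₂·c₂₃·c₁₃ = c₁₂² + c₂₃² + c₁₃² + (a₁a₂ + a₃a₄)·c₁₂ + (a₂a₃ + a₁a₄)·c₂₃ + (a₁a₃ + a₂a₄)·c₁₃ + a₁a₂a₃a₄ + a₁² + a₂² + a₃² + a₄² − 4. (This is the Fricke relation identifying the genus-zero 4-punctured SL(2,ℂ)-character variety with the Fricke–Klein family of affine cubic surfaces; the variables are the negative-trace coordinates coming from the skein algebra at A = −1.) -/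
/-- The Fricke relation: for `A₁, A₂, A₃ ∈ SL(2,ℂ)`, the negative-trace coordinates
`aᵢ = −tr Aᵢ`, `a₄ = −tr(A₁A₂A₃)`, `c₁₂ = −tr(A₁A₂)`, `c₂₃ = −tr(A₂A₃)`,
`c₁₃ = −tr(A₁A₃)` satisfy the Fricke–Klein cubic relation identifying the genus-zero
4-punctured `SL(2,ℂ)`-character variety with the Fricke–Klein family of affine cubic
surfaces. -/
theorem fricke_relation (A₁ A₂ A₃ : Matrix (Fin 2) (Fin 2) ℂ)
    (h1 : A₁.det = 1) (h2 : A₂.det = 1) (h3 : A₃.det = 1) :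
    let a₁ := -A₁.trace
    let a₂ := -A₂.trace
    let a₃ := -A₃.trace
    let a₄ := -(A₁ * A₂ * A₃).trace
    let c₁₂ := -(A₁ * A₂).trace
    let c₂₃ := -(A₂ * A₃).trace
    let c₁₃ := -(A₁ * A₃).trace
    c₁₂ * c₂₃ * c₁₃ =
      c₁₂ ^ 2 + c₂₃ ^ 2 + c₁₃ ^ 2 + (a₁ * a₂ + a₃ * a₄) * c₁₂ +
        (a₂ * a₃ + a₁ * a₄) * c₂₃ + (a₁ * a₃ + a₂ * a₄) * c₁₃ +
        a₁ * a₂ * a₃ * a₄ + a₁ ^ 2 + a₂ ^ 2 + a₃ ^ 2 + a₄ ^ 2 - 4 := by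
  rw [Matrix.det_fin_two] at h1 h2 h3
  simp only [Matrix.trace_fin_two, Matrix.mul_apply, Fin.sum_univ_two]
  linear_combination (((-2:ℂ)) + ((1:ℂ) * (A₃ 1 1) * (A₃ 1 1)) + ((1:ℂ) * (A₃ 0 0) * (A₃ 0 0)) + ((1:ℂ) * (A₂ 1 1) * (A₂ 1 1)) + ((-1:ℂ) * (A₂ 1 1) * (A₂ 1 1) * (A₃ 0 0) * (A₃ 1 1)) + ((1:ℂ) * (A₂ 1 0) * (A₂ 1 1) * (A₃ 0 1) * (A₃ 1 1)) + ((-1:ℂ) * (A₂ 1 0) * (A₂ 1 1) * (A₃ 0 0) * (A₃ 0 1)) + ((1:ℂ) * (A₂ 1 0) * (A₂ 1 0) * (A₃ 0 1) * (A₃ 0 1)) + ((1:ℂ) * (A₂ 0 1) * (A₂ 1 1) * (A₃ 1 0) * (A₃ 1 1)) + ((-1:ℂ) * (A₂ 0 1) * (A₂ 1 1) * (A₃ 0 0) * (A₃ 1 0)) + ((1:ℂ) * (A₂ 0 1) * (A₂ 0 1) * (A₃ 1 0) * (A₃ 1 0)) + ((-1:ℂ) * (A₂ 0 0) * (A₂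 1 1) * (A₃ 1 1) * (A₃ 1 1)) + ((2:ℂ) * (A₂ 0 0) * (A₂ 1 1) * (A₃ 0 0) * (A₃ 1 1)) + ((-1:ℂ) * (A₂ 0 0) * (A₂ 1 1) * (A₃ 0 0) * (A₃ 0 0)) + ((-1:ℂ) * (A₂ 0 0) * (A₂ 1 0) * (A₃ 0 1) * (A₃ 1 1)) + ((1:ℂ) * (A₂ 0 0) * (A₂ 1 0) * (A₃ 0 0) * (A₃ 0 1)) + ((-1:ℂ) * (A₂ 0 0) * (A₂ 0 1) * (A₃ 1 0) * (A₃ 1 1)) + ((1:ℂ) * (A₂ 0 0) * (A₂ 0 1) * (A₃ 0 0) * (A₃ 1 0)) + ((1:ℂ) * (A₂ 0 0) * (A₂ 0 0)) + ((-1:ℂ) * (A₂ 0 0) * (A₂ 0 0) * (A₃ 0 0) * (A₃ 1 1))) * h1 + (((-2:ℂ)) + ((2:ℂ) * (A₃ 0 0) * (A₃ 1 1)) + ((1:ℂ) * (A₁ 1 1) * (A₁ 1 1)) + ((-1:ℂ) * (A₁ 1 1) * (A₁ 1 1) * (A₃ 0 0) * (A₃ 1 1)) + ((1:ℂ) * (A₁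 1 0) * (A₁ 1 1) * (A₃ 0 1) * (A₃ 1 1)) + ((-1:ℂ) * (A₁ 1 0) * (A₁ 1 1) * (A₃ 0 0) * (A₃ 0 1)) + ((1:ℂ) * (A₁ 1 0) * (A₁ 1 0) * (A₃ 0 1) * (A₃ 0 1)) + ((1:ℂ) * (A₁ 0 1) * (A₁ 1 1) * (A₃ 1 0) * (A₃ 1 1)) + ((-1:ℂ) * (A₁ 0 1) * (A₁ 1 1) * (A₃ 0 0) * (A₃ 1 0)) + ((-1:ℂ) * (A₁ 0 1) * (A₁ 1 0) * (A₃ 1 1) * (A₃ 1 1)) + ((2:ℂ) * (A₁ 0 1) * (A₁ 1 0) * (A₃ 0 0) * (A₃ 1 1)) + ((-1:ℂ) * (A₁ 0 1) * (A₁ 1 0) * (A₃ 0 0) * (A₃ 0 0)) + ((1:ℂ) * (A₁ 0 1) * (A₁ 0 1) * (A₃ 1 0) * (A₃ 1 0)) + ((-1:ℂ) * (A₁ 0 0) * (A₁ 1 0) * (A₃ 0 1) * (A₃ 1 1)) + ((1:ℂ) * (A₁ 0 0) * (A₁ 1 0) * (A₃ 0 0) * (A₃ 0 1)) + ((-1:ℂ)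 * (A₁ 0 0) * (A₁ 0 1) * (A₃ 1 0) * (A₃ 1 1)) + ((1:ℂ) * (A₁ 0 0) * (A₁ 0 1) * (A₃ 0 0) * (A₃ 1 0)) + ((1:ℂ) * (A₁ 0 0) * (A₁ 0 0)) + ((-1:ℂ) * (A₁ 0 0) * (A₁ 0 0) * (A₃ 0 0) * (A₃ 1 1))) * h2 + (((2:ℂ) * (A₂ 0 1) * (A₂ 1 0)) + ((-1:ℂ) * (A₁ 1 1) * (A₁ 1 1) * (A₂ 0 1) * (A₂ 1 0)) + ((1:ℂ) * (A₁ 1 0) * (A₁ 1 1) * (A₂ 0 1) * (A₂ 1 1)) + ((-1:ℂ) * (A₁ 1 0) * (A₁ 1 1) * (A₂ 0 0) * (A₂ 0 1)) + ((1:ℂ) * (A₁ 1 0) * (A₁ 1 0) * (A₂ 0 1) * (A₂ 0 1)) + ((1:ℂ) * (A₁ 0 1) * (A₁ 1 1) * (A₂ 1 0) * (A₂ 1 1)) + ((-1:ℂ) * (A₁ 0 1) * (A₁ 1 1) * (A₂ 0 0) * (A₂ 1 0)) + ((2:ℂ) * (A₁ 0 1) * (A₁ 1 0)) + ((-1:ℂ)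 * (A₁ 0 1) * (A₁ 1 0) * (A₂ 1 1) * (A₂ 1 1)) + ((2:ℂ) * (A₁ 0 1) * (A₁ 1 0) * (A₂ 0 1) * (A₂ 1 0)) + ((-1:ℂ) * (A₁ 0 1) * (A₁ 1 0) * (A₂ 0 0) * (A₂ 0 0)) + ((1:ℂ) * (A₁ 0 1) * (A₁ 0 1) * (A₂ 1 0) * (A₂ 1 0)) + ((-1:ℂ) * (A₁ 0 0) * (A₁ 1 0) * (A₂ 0 1) * (A₂ 1 1)) + ((1:ℂ) * (A₁ 0 0) * (A₁ 1 0) * (A₂ 0 0) * (A₂ 0 1)) + ((-1:ℂ) * (A₁ 0 0) * (A₁ 0 1) * (A₂ 1 0) * (A₂ 1 1)) + ((1:ℂ) * (A₁ 0 0) * (A₁ 0 1) * (A₂ 0 0) * (A₂ 1 0)) + ((-1:ℂ) * (A₁ 0 0) * (A₁ 0 0) * (A₂ 0 1) * (A₂ 1 0))) * h3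
end

section
/- Let t, s ∈ ℂ with t² − s² = 4 and s ≠ 0. Let (a, b, c, d, e₀) ∈ ℂ⁵ be nonzero with a·d − b·c = e₀² and a + d = t·e₀. Then there exist nonzero vectors x, y ∈ ℂ² and a nonzero scalar λ ∈ ℂ such that λ·A(x, y, (t,s)) = [[a,b],[c,d]] and λ·e(x, y) = e₀. (This is the surjectivity part of the claim that ι_{(t,s)} identifies ℙ¹ × ℙ¹ with the smooth quadric surface Q_t for t ≠ ±2.) -/
lemma vec_ne_zero0 (u v : ℂ) (hu : u ≠ 0) : (![u, v] : Fin 2 → ℂ) ≠ 0 := by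
  intro hx; exact hu (congrFun hx 0)

lemma vec_ne_zero1 (u v : ℂ) (hv : v ≠ 0) : (![u, v] : Fin 2 → ℂ) ≠ 0 := by
  intro hx; exact hv (congrFun hx 1)

/-- Surjectivity of the parametrization `ι_{(t,s)}` onto the quadric `Q_t` for `t ≠ ±2`:
every nonzero `(a,b,c,d,e₀)` with `ad − bc = e₀²` and `a + d = t·e₀` is, up to a nonzero
scalar, of the form `(A(x,y,(t,s)), e(x,y))` for some nonzero vectors `x, y ∈ ℂ²`. -/
theorem Amat_surjective_on_quadric (t s : ℂ) (h : t ^ 2 - s ^ 2 = 4) (hs : s ≠ 0)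
    (a b c d e₀ : ℂ) (h0 : (a, b, c, d, e₀) ≠ (0, 0, 0, 0, 0))
    (hdet : a * d - b * c = e₀ ^ 2) (htr : a + d = t * e₀) :
    ∃ (x y : Fin 2 → ℂ) (lam : ℂ), x ≠ 0 ∧ y ≠ 0 ∧ lam ≠ 0 ∧
      lam • Amat t s x y = !![a, b; c, d] ∧ lam * eFun x y = e₀ := by
  have key : (d - (t + s) / 2 * e₀) * (d - (t - s) / 2 * e₀) = -(b * c) := by
    linear_combination -hdet + d * htr + (e₀ ^ 2 / 4) * h
  by_cases hb : b ≠ 0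
  · refine ⟨![b, d - (t - s) / 2 * e₀], ![1, (d - (t + s) / 2 * e₀) / b], 1 / s,
      vec_ne_zero0 _ _ hb, vec_ne_zero0 _ _ one_ne_zero, one_div_ne_zero hs, ?_, ?_⟩
    · ext i j
      fin_cases i <;> fin_cases j <;> simp [Amat, Matrix.smul_apply]
      · rw [mul_div_cancel₀ _ hb, inv_mul_eq_iff_eq_mul₀ hs]
        linear_combination (-s) * htr
      · field_simp
      · field_simp
        linear_combination (-4) * key
      · rw [mul_div_cancel₀ _ hb, inv_mul_eq_iff_eq_mul₀ hs]
        ring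
    · show 1 / s * ((d - (t - s) / 2 * e₀) * 1 - b * ((d - (t + s) / 2 * e₀) / b)) = e₀
      rw [mul_div_cancel₀ _ hb, one_div, inv_mul_eq_iff_eq_mul₀ hs]
      ring
  · push_neg at hb
    by_cases hR : d - (t - s) / 2 * e₀ ≠ 0
    · have hQ : d - (t + s) / 2 * e₀ = 0 := by
        have h' : (d - (t + s) / 2 * e₀) * (d - (t - s) / 2 * e₀) = 0 := by
          rw [key, hb]; ring
        exact (mul_eq_zero.mp h').resolve_right hR
      refine ⟨![0, d - (t - s) / 2 * e₀], ![1, -c / (d - (t - s) / 2 * e₀)], 1 / s,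
        vec_ne_zero1 _ _ hR, vec_ne_zero0 _ _ one_ne_zero, one_div_ne_zero hs, ?_, ?_⟩
      · ext i j
        fin_cases i <;> fin_cases j <;> simp [Amat, Matrix.smul_apply]
        · rw [inv_mul_eq_iff_eq_mul₀ hs]
          linear_combination (-s) * htr + ((t + s) / 2) * hQ
        · exact hb.symm
        · rw [mul_div_cancel₀ _ hR]
          field_simp
        · rw [inv_mul_eq_iff_eq_mul₀ hs]
          linear_combination ((t - s) / 2) * hQ
      · show 1 / s * ((d - (t - s) / 2 * e₀) * 1 - 0 * (-c / (d - (t - s) / 2 * e₀))) = e₀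
        rw [one_div, inv_mul_eq_iff_eq_mul₀ hs]
        linear_combination hQ
    · push_neg at hR
      by_cases hQU : (d - (t + s) / 2 * e₀) = 0 ∧ c = 0
      · exfalso
        obtain ⟨hQ, hc⟩ := hQU
        have he : e₀ = 0 := by
          have hse : s * e₀ = 0 := by linear_combination hR - hQ
          exact (mul_eq_zero.mp hse).resolve_left hs
        rw [he] at hR; simp at hR
        rw [he, hR] at htr; simp at htr
        exact h0 (by simp [htr, hb, hc, hR, he])
      · have hx : (![d - (t + s) / 2 * e₀, -c] : Fin 2 → ℂ) ≠ 0 := by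
          intro hx
          exact hQU ⟨congrFun hx 0, by simpa [neg_eq_zero] using congrFun hx 1⟩
        refine ⟨![d - (t + s) / 2 * e₀, -c], ![0, 1], 1 / s, hx,
          vec_ne_zero1 _ _ one_ne_zero, one_div_ne_zero hs, ?_, ?_⟩
        · ext i j
          fin_cases i <;> fin_cases j <;> simp [Amat, Matrix.smul_apply]
          · rw [neg_mul_eq_mul_neg, inv_mul_eq_iff_eq_mul₀ hs]
            linear_combination (-s) * htr + (-(t - s) / 2) * hR
          · exact hb.symm
          · field_simp
          · rw [neg_mul_eq_mul_neg, inv_mul_eq_iff_eq_mul₀ hs]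
            linear_combination (-(t + s) / 2) * hR
        · show 1 / s * ((-c) * 0 - (d - (t + s) / 2 * e₀) * 1) = e₀
          rw [one_div, inv_mul_eq_iff_eq_mul₀ hs]
          linear_combination -hR
end

section
/- Let t, s ∈ ℂ with s ≠ 0, and let x, y, x′, y′ ∈ ℂ² be nonzero vectors. Suppose λ ∈ ℂ is nonzero and A(x, y, (t,s)) = λ·A(x′, y′, (t,s)) and e(x, y) = λ·e(x′, y′). Then there exist nonzero scalars μ, ν ∈ ℂ with x = μ·x′ and y = ν·y′. (This is the injectivity-up-to-scalars part of the claim that ι_{(t,s)} identifies ℙ¹ × ℙ¹ with the quadric Q_t.) -/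
/-- Injectivity up to scalars of the parametrization `ι_{(t,s)}` (for `s ≠ 0`): if
`A(x,y,(t,s)) = λ·A(x′,y′,(t,s))` and `e(x,y) = λ·e(x′,y′)` with `λ ≠ 0` and all vectors
nonzero, then `x` and `x′` (resp. `y` and `y′`) differ by nonzero scalars. -/
theorem Amat_injective_up_to_scalars (t s : ℂ) (hs : s ≠ 0)
    (x y x' y' : Fin 2 → ℂ) (hx : x ≠ 0) (hy : y ≠ 0) (hx' : x' ≠ 0) (hy' : y' ≠ 0)
    (lam : ℂ) (hlam : lam ≠ 0)
    (hA : Amat t s x y = lam • Amat t s x' y')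
    (he : eFun x y = lam * eFun x' y') :
    ∃ μ ν : ℂ, μ ≠ 0 ∧ ν ≠ 0 ∧ x = μ • x' ∧ y = ν • y' := by
  have h00 := congrFun (congrFun hA 0) 0
  have h01 := congrFun (congrFun hA 0) 1
  have h10 := congrFun (congrFun hA 1) 0
  have h11 := congrFun (congrFun hA 1) 1
  simp [Amat, Matrix.smul_apply] at h00 h01 h10 h11
  have e00 : (t - s) / 2 * (x 1 * y 0) - (t + s) / 2 * (x 0 * y 1)
      = lam * ((t - s) / 2 * (x' 1 * y' 0) - (t + s) / 2 * (x' 0 * y' 1)) := h00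
  have e11 : (t + s) / 2 * (x 1 * y 0) - (t - s) / 2 * (x 0 * y 1)
      = lam * ((t + s) / 2 * (x' 1 * y' 0) - (t - s) / 2 * (x' 0 * y' 1)) := h11
  have e01 : s * (x 0 * y 0) = lam * (s * (x' 0 * y' 0)) := h01
  have e10 : s * (x 1 * y 1) = lam * (s * (x' 1 * y' 1)) := h10
  rw [eFun, eFun] at he
  have key2 : x 1 * y 0 + x 0 * y 1 = lam * (x' 1 * y' 0 + x' 0 * y' 1) := by
    have key : s * (x 1 * y 0 + x 0 * y 1) = s * (lam * (x' 1 * y' 0 + x' 0 * y' 1)) := by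
      linear_combination e11 - e00
    exact mul_left_cancel₀ hs key
  have p01 : x 0 * y 1 = lam * (x' 0 * y' 1) := by linear_combination (key2 - he) / 2
  have p10 : x 1 * y 0 = lam * (x' 1 * y' 0) := by linear_combination (key2 + he) / 2
  have p00 : x 0 * y 0 = lam * (x' 0 * y' 0) :=
    mul_left_cancel₀ hs (by linear_combination e01)
  have p11 : x 1 * y 1 = lam * (x' 1 * y' 1) :=
    mul_left_cancel₀ hs (by linear_combination e10)
  have P : ∀ i j : Fin 2, x i * y j = lam * (x' i * y' j) := by
    intro i j
    fin_cases i <;> fin_cases j <;> assumption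
  obtain ⟨a, ha⟩ := Function.ne_iff.mp hx
  obtain ⟨b, hb⟩ := Function.ne_iff.mp hy
  simp only [Pi.zero_apply] at ha hb
  have hab : x a * y b ≠ 0 := mul_ne_zero ha hb
  have hab' : x' a * y' b ≠ 0 := by
    intro h
    apply hab
    rw [P a b, h, mul_zero]
  have ha' : x' a ≠ 0 := fun h => hab' (by rw [h, zero_mul])
  have hb' : y' b ≠ 0 := fun h => hab' (by rw [h, mul_zero])
  refine ⟨x a / x' a, y b / y' b, div_ne_zero ha ha', div_ne_zero hb hb', ?_, ?_⟩
  · funext i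
    simp only [Pi.smul_apply, smul_eq_mul]
    rw [div_mul_eq_mul_div, eq_div_iff ha']
    apply mul_left_cancel₀ hb
    linear_combination x' a * P i b - x' i * P a b
  · funext j
    simp only [Pi.smul_apply, smul_eq_mul]
    rw [div_mul_eq_mul_div, eq_div_iff hb']
    apply mul_left_cancel₀ ha
    linear_combination y' b * P a j - y' j * P a b
end

section
/- Let t, s ∈ ℂ with t² − s² = 4, and let u, v′ ∈ ℂ. Define M(u, v′) to be the 2×2 matrix with rows (t·v′ − u, u² − s²·v′²) and (−1, t·v′ + u). Then det M(u, v′) = (2v′)², tr M(u, v′) = t·(2v′), and s·M(u, v′) = A((u − s·v′, 1), (u + s·v′, 1), (t,s)). In particular, M(u, v′) is a well-defined point of (the affine cone over) Q_t for all values of s, including the degenerate limit s = 0 (t = ±2): the parametrization ι extends over the blowup chart v = s·v′ to the fibers over t = ±2. -/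
/-- The blowup-chart extension of the parametrization `ι` over `t = ±2`: for
`t² − s² = 4`, the matrix `M(u,v′) = [[t·v′ − u, u² − s²·v′²], [−1, t·v′ + u]]` satisfies
`det M = (2v′)²`, `tr M = t·(2v′)`, and `s·M(u,v′) = A((u − s·v′, 1), (u + s·v′, 1), (t,s))`;
in particular `M(u,v′)` defines a point of (the affine cone over) `Q_t` for all values of
`s`, including the degenerate limit `s = 0` (`t = ±2`). -/
theorem blowup_chart_param (t s : ℂ) (h : t ^ 2 - s ^ 2 = 4) (u v' : ℂ) :
    let M : Matrix (Fin 2) (Fin 2) ℂ :=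
      !![t * v' - u, u ^ 2 - s ^ 2 * v' ^ 2; -1, t * v' + u]
    M.det = (2 * v') ^ 2 ∧
    M.trace = t * (2 * v') ∧
    s • M = Amat t s ![u - s * v', 1] ![u + s * v', 1] := by
  intro M
  refine ⟨?_, ?_, ?_⟩
  · simp only [M, Matrix.det_fin_two_of]
    linear_combination v' ^ 2 * h
  · simp only [M, Matrix.trace_fin_two_of]
    ring
  · ext i j
    fin_cases i <;> fin_cases j <;> simp [M, Amat]
    all_goals try exact Or.inl (by ring)
    all_goals ring
end

section
/- Let t ∈ ℝ with |t| < 2 and set s = i·√(4 − t²). For every 2×2 complex matrix M in SU(2) (i.e., unitary of determinant 1) with tr(M) = t, there exists a nonzero vector x = (x₁,x₂) ∈ ℂ² such that M = (|x₁|² + |x₂|²)⁻¹ · A(x, (x̄₂, −x̄₁), (t,s)). In other words, the parametrization ι_{(t,s)} restricted to the fixed locus of the twisted involution η̃ maps onto the whole conjugacy class SU(2)_{tr = t}. -/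
/-- For real `t` with `|t| < 2` and `s = i√(4 − t²)`: every `M ∈ SU(2)` (unitary of
determinant 1) with `tr M = t` is of the form
`(|x₁|² + |x₂|²)⁻¹ · A(x, (x̄₂, −x̄₁), (t,s))` for some nonzero `x ∈ ℂ²`; i.e. the
parametrization `ι_{(t,s)}` restricted to the fixed locus of the twisted involution `η̃`
maps onto the whole conjugacy class `SU(2)_{tr = t}`. -/
theorem su2_class_surjective (t : ℝ) (ht : |t| < 2) (M : Matrix (Fin 2) (Fin 2) ℂ)
    (hU : star M * M = 1) (hdet : M.det = 1) (htr : M.trace = (t : ℂ)) :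
    ∃ x : Fin 2 → ℂ, x ≠ 0 ∧
      M = (((Complex.normSq (x 0) + Complex.normSq (x 1) : ℝ) : ℂ))⁻¹ •
        Amat (t : ℂ) (Complex.I * (Real.sqrt (4 - t ^ 2) : ℂ)) x
          ![(starRingEnd ℂ) (x 1), -(starRingEnd ℂ) (x 0)] := by
  set σ := Real.sqrt (4 - t ^ 2) with hσdef
  have ht4 : 0 < 4 - t ^ 2 := by
    rcases abs_lt.mp ht with ⟨h1, h2⟩; nlinarith
  have hσpos : 0 < σ := Real.sqrt_pos.mpr ht4
  have hσ2 : σ ^ 2 = 4 - t ^ 2 := Real.sq_sqrt ht4.le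
  have hst : star M = M⁻¹ := (Matrix.inv_eq_left_inv hU).symm
  have hadj : M⁻¹ = M.adjugate := by rw [Matrix.inv_def, hdet]; simp
  rw [hadj, Matrix.adjugate_fin_two] at hst
  have hd : (starRingEnd ℂ) (M 0 0) = M 1 1 := by
    have := congrFun (congrFun hst 0) 0
    simpa [Matrix.star_apply] using this
  have hc : (starRingEnd ℂ) (M 0 1) = - M 1 0 := by
    have := congrFun (congrFun hst 1) 0
    simpa [Matrix.star_apply] using this
  have hc' : M 1 0 = -(starRingEnd ℂ) (M 0 1) := by rw [hc]; ring
  have htr2 : M 0 0 + M 1 1 = (t : ℂ) := by rw [← Matrix.trace_fin_two]; exact htr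
  have hre : (M 0 0).re = t / 2 := by
    have h := htr2
    rw [← hd, Complex.add_conj] at h
    have h2 : 2 * (M 0 0).re = t := by exact_mod_cast h
    linarith
  have hdet2 : (Complex.normSq (M 0 0) + Complex.normSq (M 0 1) : ℝ) = 1 := by
    have h := hdet
    rw [Matrix.det_fin_two, ← hd, hc'] at h
    have h2 : ((Complex.normSq (M 0 0) : ℂ) + (Complex.normSq (M 0 1) : ℂ)) = 1 := by
      rw [← Complex.mul_conj, ← Complex.mul_conj]; linear_combination h
    exact_mod_cast h2
  set α := (M 0 0).im with hαdef
  have hkey : α ^ 2 + Complex.normSq (M 0 1) = σ ^ 2 / 4 := by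
    have h0 : Complex.normSq (M 0 0) = (t/2)^2 + α^2 := by
      rw [Complex.normSq_apply, hre]; ring
    nlinarith [hdet2]
  have ha : M 0 0 = ((t/2 : ℝ) : ℂ) + (α : ℂ) * Complex.I := by
    apply Complex.ext <;> simp [hre, hαdef]
  have hd' : M 1 1 = ((t/2 : ℝ) : ℂ) - (α : ℂ) * Complex.I := by
    rw [← hd, ha]
    simp only [map_add, map_mul, Complex.conj_ofReal, Complex.conj_I]
    ring
  have h2α : 2 * α ≤ σ := by
    nlinarith [Complex.normSq_nonneg (M 0 1), sq_nonneg (2*α - σ), sq_nonneg (2*α + σ)]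
  rcases eq_or_lt_of_le h2α with heq | hlt
  · -- α = σ/2, b = 0
    have hnb0 : Complex.normSq (M 0 1) = 0 := by nlinarith
    have hb0 : M 0 1 = 0 := Complex.normSq_eq_zero.mp hnb0
    refine ⟨![1, 0], ?_, ?_⟩
    · intro h; simpa using congrFun h 0
    · have hαc : (2 * (α:ℂ)) = (σ : ℂ) := by exact_mod_cast congrArg (Complex.ofReal) heq
      ext i j
      fin_cases i <;> fin_cases j <;>
        simp [Amat, Matrix.smul_apply, ha, hd', hb0, hc'] <;>
        push_cast <;>
        first
          | linear_combination (Complex.I/2) * hαc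
          | linear_combination (-(Complex.I)/2) * hαc
          | linear_combination Complex.I * hαc
          | linear_combination (-Complex.I) * hαc
          | ring
  · -- general case
    have hρ : (0:ℝ) < σ - 2*α := by linarith
    set b := M 0 1 with hbdef
    refine ⟨![-2*Complex.I*b, ((σ - 2*α : ℝ) : ℂ)], ?_, ?_⟩
    · intro h
      have h1 := congrFun h 1
      simp at h1
      have h2 : σ - 2*α = 0 := by
        have h3 := congrArg Complex.re h1
        simp at h3
        linarith
      linarith
    · have hnb : Complex.normSq b = σ^2/4 - α^2 := by linarith
      have e1 : Complex.normSq (-2*Complex.I*b) = 4 * Complex.normSq b := by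
        simp [Complex.normSq_mul]
        norm_num
      have e2 : Complex.normSq ((σ - 2*α : ℝ) : ℂ) = (σ - 2*α)^2 := by
        rw [Complex.normSq_ofReal]; ring
      have hN : (Complex.normSq ((![-2*Complex.I*b, ((σ - 2*α : ℝ) : ℂ)]) 0)
          + Complex.normSq ((![-2*Complex.I*b, ((σ - 2*α : ℝ) : ℂ)]) 1) : ℝ)
          = 2*σ*(σ - 2*α) := by
        simp only [Matrix.cons_val_zero, Matrix.cons_val_one, Matrix.head_cons, e1, e2, hnb]
        ring
      have hNne : (((2*σ*(σ - 2*α) : ℝ)) : ℂ) ≠ 0 := by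
        rw [Complex.ofReal_ne_zero]; positivity
      rw [hN, eq_comm, inv_smul_eq_iff₀ hNne]
      have hbb : b * (starRingEnd ℂ) b = ((σ:ℂ))^2/4 - ((α:ℂ))^2 := by
        rw [Complex.mul_conj, hnb]; push_cast; ring
      ext i j
      fin_cases i <;> fin_cases j <;>
        simp [Amat, Matrix.smul_apply, ha, hd', hc', map_mul, map_ofNat, Complex.conj_ofReal, Complex.conj_I] <;>
        push_cast <;>
        first
          | linear_combination (-2*Complex.I^2*((t:ℂ) + Complex.I*(σ:ℂ))) * hbb +
              (-(((σ:ℂ))^2/2 - 2*((α:ℂ))^2)*((t:ℂ) + Complex.I*(σ:ℂ))) * Complex.I_sq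
          | linear_combination (2*(σ:ℂ)*b*(2*((α:ℂ)) - (σ:ℂ))) * Complex.I_sq
          | linear_combination (2*(σ:ℂ)*((starRingEnd ℂ) b)*((σ:ℂ) - 2*((α:ℂ)))) * Complex.I_sq
          | linear_combination (-2*Complex.I^2*((t:ℂ) - Complex.I*(σ:ℂ))) * hbb +
              (-(((σ:ℂ))^2/2 - 2*((α:ℂ))^2)*((t:ℂ) - Complex.I*(σ:ℂ))) * Complex.I_sq
end

section
/- Let t ∈ ℝ with |t| < 2 and set y₀ = √(4 − t²). For every matrix M ∈ SL(2,ℝ) with tr(M) = t (an elliptic element), there exists x = (x₁,x₂) ∈ ℂ² with Im(x₂·x̄₁) ≠ 0 such that, writing z = x₂·x̄₁, M = (1/(2·Im z)) · [[ t·Im z − y₀·Re z, y₀·|x₁|² ], [ −y₀·|x₂|², t·Im z + y₀·Re z ]]. In other words, the parametrization ι_{(t, i·y₀)} restricted to the fixed locus of the twisted involution τ̃ (away from the diagonal) maps onto the set of all elliptic elements of SL(2,ℝ) of trace t; geometrically, every elliptic element of SL(2,ℝ) is the rotation by angle θ (with t = 2cos(θ/2)) about some fixed point in the upper half plane. -/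
/-- For real `t` with `|t| < 2` and `y₀ = √(4 − t²)`: every elliptic `M ∈ SL(2,ℝ)` with
`tr M = t` is of the form
`(1/(2·Im z)) · [[t·Im z − y₀·Re z, y₀·|x₁|²], [−y₀·|x₂|², t·Im z + y₀·Re z]]`
for some `x = (x₁,x₂) ∈ ℂ²` with `z = x₂·x̄₁` satisfying `Im z ≠ 0`; i.e. the
parametrization `ι_{(t, i·y₀)}` restricted to the fixed locus of the twisted involution
`τ̃` (away from the diagonal) maps onto the set of all elliptic elements of `SL(2,ℝ)` of
trace `t`. -/
theorem sl2R_elliptic_class_surjective (t : ℝ) (ht : |t| < 2)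
    (M : Matrix (Fin 2) (Fin 2) ℝ) (hdet : M.det = 1) (htr : M.trace = t) :
    ∃ x : Fin 2 → ℂ,
      (x 1 * (starRingEnd ℂ) (x 0)).im ≠ 0 ∧
      M = (1 / (2 * (x 1 * (starRingEnd ℂ) (x 0)).im)) •
        !![t * (x 1 * (starRingEnd ℂ) (x 0)).im -
              Real.sqrt (4 - t ^ 2) * (x 1 * (starRingEnd ℂ) (x 0)).re,
            Real.sqrt (4 - t ^ 2) * Complex.normSq (x 0);
            -(Real.sqrt (4 - t ^ 2) * Complex.normSq (x 1)),
            t * (x 1 * (starRingEnd ℂ) (x 0)).im +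
              Real.sqrt (4 - t ^ 2) * (x 1 * (starRingEnd ℂ) (x 0)).re] := by
  set a := M 0 0 with ha
  set b := M 0 1 with hb'
  set c := M 1 0 with hc'
  set d := M 1 1 with hd'
  have hdet' : a * d - b * c = 1 := by
    rw [Matrix.det_fin_two] at hdet; exact hdet
  have htr' : a + d = t := by
    rw [Matrix.trace_fin_two] at htr; exact htr
  have ht2 : t ^ 2 < 4 := by
    have := abs_nonneg t
    nlinarith [sq_abs t]
  have hy : 0 < Real.sqrt (4 - t ^ 2) := Real.sqrt_pos.2 (by linarith)
  set y := Real.sqrt (4 - t ^ 2) with hyd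
  have hy2 : y ^ 2 = 4 - t ^ 2 := Real.sq_sqrt (by linarith)
  have hb : b ≠ 0 := by
    intro h
    rw [h] at hdet'
    have h1 : a * d = 1 := by linarith
    have h3 : (a + d) ^ 2 = t ^ 2 := by rw [htr']
    nlinarith [sq_nonneg (a - d)]
  have hab : |b| ≠ 0 := abs_ne_zero.2 hb
  refine ⟨![((|b| : ℝ) : ℂ), ⟨(d - a) * b / 2 / |b|, y * b / 2 / |b|⟩], ?_, ?_⟩
  · show ((⟨(d - a) * b / 2 / |b|, y * b / 2 / |b|⟩ : ℂ) * (starRingEnd ℂ) ((|b| : ℝ) : ℂ)).im ≠ 0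
    simp only [Complex.mul_im, Complex.conj_ofReal, Complex.ofReal_re, Complex.ofReal_im,
      mul_zero, zero_add, add_zero]
    rw [div_mul_cancel₀ _ hab]
    rcases lt_or_gt_of_ne hb with h | h
    · have : y * b / 2 < 0 := by
        apply div_neg_of_neg_of_pos _ two_pos
        exact mul_neg_of_pos_of_neg hy h
      linarith
    · have : 0 < y * b / 2 := by positivity
      linarith
  · have him : ((⟨(d - a) * b / 2 / |b|, y * b / 2 / |b|⟩ : ℂ) *
        (starRingEnd ℂ) ((|b| : ℝ) : ℂ)).im = y * b / 2 := by
      simp only [Complex.mul_im, Complex.conj_ofReal, Complex.ofReal_re, Complex.ofReal_im,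
        mul_zero, zero_add, add_zero]
      exact div_mul_cancel₀ _ hab
    have hre : ((⟨(d - a) * b / 2 / |b|, y * b / 2 / |b|⟩ : ℂ) *
        (starRingEnd ℂ) ((|b| : ℝ) : ℂ)).re = (d - a) * b / 2 := by
      simp only [Complex.mul_re, Complex.conj_ofReal, Complex.ofReal_re, Complex.ofReal_im,
        mul_zero, sub_zero]
      exact div_mul_cancel₀ _ hab
    have hn0 : (Complex.normSq ((|b| : ℝ) : ℂ) : ℝ) = b ^ 2 := by
      simp [Complex.normSq_ofReal, abs_mul_abs_self, sq]
    have h2 : |b| * |b| = b * b := abs_mul_abs_self b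
    have hn1 : Complex.normSq (⟨(d - a) * b / 2 / |b|, y * b / 2 / |b|⟩ : ℂ) = -(b * c) := by
      rw [Complex.normSq_mk]
      field_simp
      linear_combination 4 * c * sq_abs b + b * hy2 + b * (a + d + t) * htr' - 4 * b * hdet'
    have hyb : y * b ≠ 0 := mul_ne_zero (ne_of_gt hy) hb
    ext i j
    fin_cases i <;> fin_cases j <;>
      simp only [Matrix.smul_apply, Matrix.cons_val', Matrix.cons_val_zero, Matrix.cons_val_one,
        Matrix.head_cons, Matrix.head_fin_const, Matrix.empty_val', Matrix.cons_val_fin_one,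
        Matrix.of_apply, smul_eq_mul, him, hre, hn0, hn1, Fin.zero_eta, Fin.mk_one]
    · show a = _
      field_simp
      linear_combination htr'
    · show b = _
      field_simp
    · show c = _
      field_simp
    · show d = _
      field_simp
      linear_combination htr'
end
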